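/- For the additive hazards model λ(t|Z) = 1 + βZ with Z ~ Bernoulli(1/2), the limit of the explained variation as β → ∞ is 1/3: lim_{β→∞} Ω²(β) = 1/3. -/

import Mathlib

open Real Filter

/-- For the additive hazards model `λ(t|Z) = 1 + βZ` with `Z ~ Bernoulli(1/2)`
(so `T|Z=0 ~ Exp(1)`, `T|Z=1 ~ Exp(1+β)`), the explained variation
`Ω²(β) = Var(E[T|Z]) / Var(T)` tends to `1/3` as `β → ∞`. -/
theorem explained_variation_limit_one_third
    (VarE VarT Ω2 : ℝ → ℝ)
    (hVarE : ∀ β, VarE β = (1/4) * (1 - 1/(1+β))^2)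
    (hVarT : ∀ β, VarT β = (1/2) * (1 + 1/(1+β)^2) + (1/4) * (1 - 1/(1+β))^2)
    (hΩ : ∀ β, Ω2 β = VarE β / VarT β) :
    Tendsto Ω2 atTop (nhds (1/3)) := by
  have hu : Tendsto (fun β : ℝ => 1/(1+β)) atTop (nhds 0) := by
    simpa [Pi.inv_def] using (tendsto_atTop_add_const_left atTop (1:ℝ) tendsto_id).inv_tendsto_atTop
  have hcont : Continuous (fun u : ℝ =>
      ((1/4) * (1 - u)^2) / ((1/2) * (1 + u^2) + (1/4) * (1 - u)^2)) := by
    apply Continuous.div (by continuity) (by continuity)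
    intro u
    nlinarith [sq_nonneg u, sq_nonneg (1 - u)]
  have h := (hcont.tendsto 0).comp hu
  have heq : (fun β : ℝ => ((1/4) * (1 - 1/(1+β))^2) /
      ((1/2) * (1 + (1/(1+β))^2) + (1/4) * (1 - 1/(1+β))^2)) = Ω2 := by
    funext β
    rw [hΩ, hVarE, hVarT, div_pow, one_pow]
  rw [← heq]
  convert h using 2 <;> norm_num
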